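/- Let n ≥ 3, let A be the all-heads string HH…H of length n, and let B be any head/tail string of length n with B ≠ A. Then C(B,B) − C(B,A) > 0 and C(A,A) − C(A,B) ≥ C(B,B) − C(B,A), with equality holding if and only if B is the all-tails string TT…T or the string HH…HT consisting of n−1 heads followed by one tail. (Equivalently, the odds q(A,B) = (C(A,A) − C(A,B))/(C(B,B) − C(B,A)) in favor of A in the flipped Penney-Ante game satisfy q(A,B) ≥ 1, with equality exactly for those two strings B.) -/

import Mathlib

/-- The Conway number (correlation) `C(A,B)` of two head/tail strings of length `n`,
encoded as functions `Fin n → Bool` (with `H = true`, `T = false`, and 0-indexed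
positions): `C(A,B) = ∑_{i=1}^n δ_i 2^{n-i}` where `δ_i = 1` iff `a_{i+j} = b_{1+j}`
for all `j = 0,…,n-i`. -/
def conway {n : ℕ} (A B : Fin n → Bool) : ℕ :=
  ∑ i : Fin n,
    if (∀ j : Fin n, (i : ℕ) + (j : ℕ) < n → A (i + j) = B j) then 2 ^ (n - 1 - (i : ℕ)) else 0

private lemma sum_two_pow (n : ℕ) : ∑ i ∈ Finset.range n, 2 ^ i = 2 ^ n - 1 := by
  induction n with
  | zero => simp
  | succ n ih =>
    rw [Finset.sum_range_succ, ih]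
    have : 1 ≤ 2 ^ n := Nat.one_le_two_pow
    omega

/-- Let `A = HH…H` be the all-heads string of length `n ≥ 3` and let `B ≠ A`. Then
`C(B,B) - C(B,A) > 0` and `C(A,A) - C(A,B) ≥ C(B,B) - C(B,A)`, with equality iff `B` is
the all-tails string `TT…T` or the string `HH…HT`. (Equivalently, the odds
`q(A,B) = (C(A,A) - C(A,B))/(C(B,B) - C(B,A))` in favor of `A` in the flipped
Penney-Ante game satisfy `q(A,B) ≥ 1`, with equality exactly for those two `B`.) -/
theorem flipped_allHeads_beats (n : ℕ) (hn : 3 ≤ n) (A B : Fin n → Bool)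
    (hA : A = fun _ => true) (hB : B ≠ A) :
    conway B A < conway B B ∧
      (conway B B : ℤ) - (conway B A : ℤ) ≤ (conway A A : ℤ) - (conway A B : ℤ) ∧
      ((conway A A : ℤ) - (conway A B : ℤ) = (conway B B : ℤ) - (conway B A : ℤ) ↔
        B = (fun _ => false) ∨ B = fun i : Fin n => decide ((i : ℕ) < n - 1)) := by
  haveI : NeZero n := ⟨by omega⟩
  have hAt : ∀ x, A x = true := fun x => by rw [hA]
  have hex : ∃ k : Fin n, B k = false := by
    by_contra h
    push_neg at h
    apply hB
    funext k
    rw [hAt k]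
    cases hBk : B k
    · exact absurd hBk (h k)
    · rfl
  obtain ⟨k0, hk0⟩ := hex
  have hv0 : ((0 : Fin n) : ℕ) = 0 := rfl
  have hv1 : ((1 : Fin n) : ℕ) = 1 := by
    rw [Fin.val_one']
    exact Nat.mod_eq_of_lt (by omega)
  have wpos : ∀ i : Fin n, 0 < 2 ^ (n - 1 - (i : ℕ)) := fun i => Nat.pow_pos (by norm_num)
  have hDAA : ∀ i : Fin n, ∀ j : Fin n, (i : ℕ) + (j : ℕ) < n → A (i + j) = A j :=
    fun i j _ => by rw [hAt, hAt]
  have hDBB0 : ∀ j : Fin n, ((0 : Fin n) : ℕ) + (j : ℕ) < n → B ((0 : Fin n) + j) = B j :=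
    fun j _ => by rw [zero_add]
  -- period 1 implies constant
  have hconst : (∀ j : Fin n, ((1 : Fin n) : ℕ) + (j : ℕ) < n → B ((1 : Fin n) + j) = B j) →
      ∀ m : Fin n, B m = B 0 := by
    intro hp
    have key : ∀ m : ℕ, (h : m < n) → B ⟨m, h⟩ = B 0 := by
      intro m
      induction m with
      | zero => intro h; congr 1
      | succ m ih =>
        intro h
        have hm : m < n := Nat.lt_of_succ_lt h
        have hlt : ((1 : Fin n) : ℕ) + ((⟨m, hm⟩ : Fin n) : ℕ) < n := by
          rw [hv1]; show 1 + m < n; omega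
        have hpe := hp ⟨m, hm⟩ hlt
        have he : (1 : Fin n) + ⟨m, hm⟩ = ⟨m + 1, h⟩ := by
          apply Fin.ext
          rw [Fin.val_add, hv1]
          show (1 + m) % n = m + 1
          rw [Nat.mod_eq_of_lt (by omega)]
          omega
        rw [he] at hpe
        rw [hpe, ih hm]
    intro m
    have := key m.val m.isLt
    rwa [Fin.eta] at this
  -- first part: conway B A < conway B B
  have h0BA : ¬ (∀ j : Fin n, ((0 : Fin n) : ℕ) + (j : ℕ) < n → B ((0 : Fin n) + j) = A j) := by
    intro h
    have := h k0 (by rw [hv0]; simpa using k0.isLt)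
    rw [zero_add, hAt, hk0] at this
    simp at this
  have hsumall : ∑ i : Fin n, 2 ^ (n - 1 - (i : ℕ)) = 2 ^ n - 1 := by
    rw [Fin.sum_univ_eq_sum_range (fun k => 2 ^ (n - 1 - k)) n]
    rw [Finset.sum_range_reflect (fun k => 2 ^ k) n]
    exact sum_two_pow n
  have hlt : conway B A < conway B B := by
    have hBAle : conway B A ≤ 2 ^ (n - 1) - 1 := by
      have h1 : conway B A = ∑ i ∈ Finset.univ.erase (0 : Fin n),
          (if (∀ j : Fin n, (i : ℕ) + (j : ℕ) < n → B (i + j) = A j)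
            then 2 ^ (n - 1 - (i : ℕ)) else 0) := by
        rw [conway, ← Finset.sum_erase _ (by rw [if_neg h0BA])]
      rw [h1]
      calc ∑ i ∈ Finset.univ.erase (0 : Fin n),
            (if (∀ j : Fin n, (i : ℕ) + (j : ℕ) < n → B (i + j) = A j)
              then 2 ^ (n - 1 - (i : ℕ)) else 0)
          ≤ ∑ i ∈ Finset.univ.erase (0 : Fin n), 2 ^ (n - 1 - (i : ℕ)) := by
            apply Finset.sum_le_sum
            intro i _
            split <;> simp
        _ = 2 ^ (n - 1) - 1 := by
            have h3 : 2 ^ (n - 1) + ∑ i ∈ Finset.univ.erase (0 : Fin n), 2 ^ (n - 1 - (i : ℕ))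
                = 2 ^ n - 1 := by
              have h4 := Finset.add_sum_erase Finset.univ
                (fun i : Fin n => 2 ^ (n - 1 - (i : ℕ))) (Finset.mem_univ (0 : Fin n))
              simpa [hsumall] using h4
            have h2 : 2 ^ n = 2 * 2 ^ (n - 1) := by
              have hh : n - 1 + 1 = n := by omega
              conv_lhs => rw [← hh, pow_succ]
              exact Nat.mul_comm _ _
            omega
    have hBBge : 2 ^ (n - 1) ≤ conway B B := by
      rw [conway]
      have h4 := Finset.single_le_sum (f := fun i : Fin n =>
          if (∀ j : Fin n, (i : ℕ) + (j : ℕ) < n → B (i + j) = B j)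
            then 2 ^ (n - 1 - (i : ℕ)) else 0)
          (fun i _ => Nat.zero_le _) (Finset.mem_univ (0 : Fin n))
      rw [if_pos hDBB0, hv0, Nat.sub_zero] at h4
      exact h4
    have : 0 < 2 ^ (n - 1) := Nat.pow_pos (by norm_num)
    omega
  -- termwise inequality
  have himp : ∀ i : Fin n,
      (∀ j : Fin n, (i : ℕ) + (j : ℕ) < n → B (i + j) = B j) →
      (∀ j : Fin n, (i : ℕ) + (j : ℕ) < n → A (i + j) = B j) →
      (∀ j : Fin n, (i : ℕ) + (j : ℕ) < n → B (i + j) = A j) := by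
    intro i h1 h2 j hj
    rw [h1 j hj, ← h2 j hj, hAt, hAt]
  have hterm : ∀ i : Fin n,
      ((if (∀ j : Fin n, (i : ℕ) + (j : ℕ) < n → B (i + j) = B j)
          then 2 ^ (n - 1 - (i : ℕ)) else 0) +
        (if (∀ j : Fin n, (i : ℕ) + (j : ℕ) < n → A (i + j) = B j)
          then 2 ^ (n - 1 - (i : ℕ)) else 0)) ≤
      ((if (∀ j : Fin n, (i : ℕ) + (j : ℕ) < n → A (i + j) = A j)
          then 2 ^ (n - 1 - (i : ℕ)) else 0) +
        (if (∀ j : Fin n, (i : ℕ) + (j : ℕ) < n → B (i + j) = A j)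
          then 2 ^ (n - 1 - (i : ℕ)) else 0)) := by
    intro i
    rw [if_pos (hDAA i)]
    by_cases h1 : (∀ j : Fin n, (i : ℕ) + (j : ℕ) < n → B (i + j) = B j) <;>
      by_cases h2 : (∀ j : Fin n, (i : ℕ) + (j : ℕ) < n → A (i + j) = B j)
    · rw [if_pos h1, if_pos h2, if_pos (himp i h1 h2)]
    · rw [if_pos h1, if_neg h2]
      exact Nat.add_le_add le_rfl (Nat.zero_le _)
    · rw [if_neg h1, if_pos h2, zero_add]
      exact Nat.le_add_right _ _
    · rw [if_neg h1, if_neg h2]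
      exact Nat.zero_le _
  have hnat_le : conway B B + conway A B ≤ conway A A + conway B A := by
    rw [conway, conway, conway, conway, ← Finset.sum_add_distrib, ← Finset.sum_add_distrib]
    exact Finset.sum_le_sum fun i _ => hterm i
  -- forward direction of the iff
  have hforward : conway A A + conway B A = conway B B + conway A B →
      (B = (fun _ => false) ∨ B = fun i : Fin n => decide ((i : ℕ) < n - 1)) := by
    intro hE
    have hsum_eq : (∑ i : Fin n,
        ((if (∀ j : Fin n, (i : ℕ) + (j : ℕ) < n → B (i + j) = B j)
            then 2 ^ (n - 1 - (i : ℕ)) else 0) +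
          (if (∀ j : Fin n, (i : ℕ) + (j : ℕ) < n → A (i + j) = B j)
            then 2 ^ (n - 1 - (i : ℕ)) else 0))) = (∑ i : Fin n,
        ((if (∀ j : Fin n, (i : ℕ) + (j : ℕ) < n → A (i + j) = A j)
            then 2 ^ (n - 1 - (i : ℕ)) else 0) +
          (if (∀ j : Fin n, (i : ℕ) + (j : ℕ) < n → B (i + j) = A j)
            then 2 ^ (n - 1 - (i : ℕ)) else 0))) := by
      rw [Finset.sum_add_distrib, Finset.sum_add_distrib]
      rw [conway, conway, conway, conway] at hE
      omega
    have hpoint := (Finset.sum_eq_sum_iff_of_le (fun i _ => hterm i)).mp hsum_eq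
    have hor : ∀ i : Fin n, (∀ j : Fin n, (i : ℕ) + (j : ℕ) < n → B (i + j) = B j) ∨
        (∀ j : Fin n, (i : ℕ) + (j : ℕ) < n → A (i + j) = B j) := by
      intro i
      by_contra hcon
      rw [not_or] at hcon
      have hpi := hpoint i (Finset.mem_univ i)
      rw [if_neg hcon.1, if_neg hcon.2, if_pos (hDAA i)] at hpi
      have h3 : (if (∀ j : Fin n, (i : ℕ) + (j : ℕ) < n → B (i + j) = A j)
          then 2 ^ (n - 1 - (i : ℕ)) else 0) ≤ 2 ^ (n - 1 - (i : ℕ)) := by split <;> simp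
      have := wpos i
      omega
    by_cases hb0 : B 0 = true
    · -- B = H…HT
      right
      have hall : ∀ k : Fin n, (k : ℕ) < n - 1 → B k = true := by
        intro k hk
        by_contra hkf
        have hkfalse : B k = false := by
          cases hBk : B k
          · rfl
          · exact absurd hBk hkf
        have h1 : ¬ (∀ j : Fin n, ((1 : Fin n) : ℕ) + (j : ℕ) < n →
            A ((1 : Fin n) + j) = B j) := by
          intro h
          have := h k (by rw [hv1]; omega)
          rw [hAt, hkfalse] at this
          simp at this
        have hp := (hor 1).resolve_right h1
        have h2 := hconst hp k
        rw [hb0] at h2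
        rw [h2] at hkfalse
        simp at hkfalse
      have hBL : B ⟨n - 1, by omega⟩ = false := by
        cases hBL' : B ⟨n - 1, by omega⟩
        · rfl
        · exfalso
          apply hB
          funext i
          rw [hAt]
          by_cases hi : (i : ℕ) < n - 1
          · exact hall i hi
          · have hieq : i = ⟨n - 1, by omega⟩ := Fin.ext (by have := i.isLt; simp; omega)
            rw [hieq, hBL']
      funext i
      by_cases hi : (i : ℕ) < n - 1
      · rw [hall i hi]
        exact (decide_eq_true hi).symm
      · have hieq : i = ⟨n - 1, by omega⟩ := Fin.ext (by have := i.isLt; simp; omega)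
        rw [hieq, hBL]
        exact (decide_eq_false (by omega : ¬ (n - 1 < n - 1))).symm
    · -- B = all tails
      left
      have hb0f : B 0 = false := by
        cases hB0 : B 0
        · rfl
        · exact absurd hB0 hb0
      have h1 : ¬ (∀ j : Fin n, ((1 : Fin n) : ℕ) + (j : ℕ) < n →
          A ((1 : Fin n) + j) = B j) := by
        intro h
        have := h 0 (by rw [hv1, hv0]; omega)
        rw [hAt, hb0f] at this
        simp at this
      have hp := (hor 1).resolve_right h1
      funext i
      rw [hconst hp i, hb0f]
  -- reverse direction
  have hrev : (B = (fun _ => false) ∨ B = fun i : Fin n => decide ((i : ℕ) < n - 1)) →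
      conway A A + conway B A = conway B B + conway A B := by
    intro hcase
    rcases hcase with hBF | hBT
    · subst hBF
      have hDBBf : ∀ i : Fin n, ∀ j : Fin n, (i : ℕ) + (j : ℕ) < n →
          (fun _ : Fin n => false) (i + j) = (fun _ : Fin n => false) j := fun _ _ _ => rfl
      have hDABf : ∀ i : Fin n, ¬ (∀ j : Fin n, (i : ℕ) + (j : ℕ) < n →
          A (i + j) = (fun _ : Fin n => false) j) := by
        intro i h
        have := h 0 (by rw [hv0]; simpa using i.isLt)
        rw [hAt] at this
        simp at this
      have hDBAf : ∀ i : Fin n, ¬ (∀ j : Fin n, (i : ℕ) + (j : ℕ) < n →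
          (fun _ : Fin n => false) (i + j) = A j) := by
        intro i h
        have := h 0 (by rw [hv0]; simpa using i.isLt)
        rw [hAt] at this
        simp at this
      rw [conway, conway, conway, conway, ← Finset.sum_add_distrib, ← Finset.sum_add_distrib]
      refine Finset.sum_congr rfl fun i _ => ?_
      rw [if_pos (hDAA i), if_neg (hDBAf i), if_pos (hDBBf i), if_neg (hDABf i)]
    · subst hBT
      set C : Fin n → Bool := fun i : Fin n => decide ((i : ℕ) < n - 1)
      have hCval : ∀ x : Fin n, C x = decide ((x : ℕ) < n - 1) := fun x => rfl
      have hvadd : ∀ (i j : Fin n), (i : ℕ) + (j : ℕ) < n →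
          ((i + j : Fin n) : ℕ) = (i : ℕ) + (j : ℕ) := fun i j h => by
        rw [Fin.val_add, Nat.mod_eq_of_lt h]
      have hmk : ∀ (m : ℕ) (h : m < n), ((⟨m, h⟩ : Fin n) : ℕ) = m := fun _ _ => rfl
      have hDBAt : ∀ i : Fin n, ¬ (∀ j : Fin n, (i : ℕ) + (j : ℕ) < n →
          C (i + j) = A j) := by
        intro i h
        have hin : (i : ℕ) < n := i.isLt
        have hjn : n - 1 - (i : ℕ) < n := by omega
        have hjlt : (i : ℕ) + ((⟨n - 1 - (i : ℕ), hjn⟩ : Fin n) : ℕ) < n := by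
          show (i : ℕ) + (n - 1 - (i : ℕ)) < n; omega
        have h5 := h ⟨n - 1 - (i : ℕ), hjn⟩ hjlt
        rw [hAt, hCval] at h5
        rw [decide_eq_true_eq] at h5
        have e1 := hvadd i ⟨n - 1 - (i : ℕ), hjn⟩ hjlt
        have e2 : ((⟨n - 1 - (i : ℕ), hjn⟩ : Fin n) : ℕ) = n - 1 - (i : ℕ) := rfl
        omega
      have hDBBt : ∀ i : Fin n, i ≠ 0 → ¬ (∀ j : Fin n, (i : ℕ) + (j : ℕ) < n →
          C (i + j) = C j) := by
        intro i hi h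
        have hipos : 0 < (i : ℕ) :=
          Nat.pos_of_ne_zero fun h' => hi (Fin.ext (by rw [h', hv0]))
        have hin : (i : ℕ) < n := i.isLt
        have hjn : n - 1 - (i : ℕ) < n := by omega
        have hjlt : (i : ℕ) + ((⟨n - 1 - (i : ℕ), hjn⟩ : Fin n) : ℕ) < n := by
          show (i : ℕ) + (n - 1 - (i : ℕ)) < n; omega
        have h5 := h ⟨n - 1 - (i : ℕ), hjn⟩ hjlt
        rw [hCval, hCval, decide_eq_decide] at h5
        have e1 := hvadd i ⟨n - 1 - (i : ℕ), hjn⟩ hjlt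
        have e2 : ((⟨n - 1 - (i : ℕ), hjn⟩ : Fin n) : ℕ) = n - 1 - (i : ℕ) := rfl
        have h7 : ((i + ⟨n - 1 - (i : ℕ), hjn⟩ : Fin n) : ℕ) < n - 1 :=
          h5.mpr (by omega)
        omega
      have hDABt : ∀ i : Fin n, i ≠ 0 → (∀ j : Fin n, (i : ℕ) + (j : ℕ) < n →
          A (i + j) = C j) := by
        intro i hi j hj
        have hipos : 0 < (i : ℕ) :=
          Nat.pos_of_ne_zero fun h' => hi (Fin.ext (by rw [h', hv0]))
        rw [hAt, hCval]
        exact (decide_eq_true (show (j : ℕ) < n - 1 by omega)).symm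
      have hDAB0 : ¬ (∀ j : Fin n, ((0 : Fin n) : ℕ) + (j : ℕ) < n →
          A ((0 : Fin n) + j) = C j) := by
        intro h
        have hjn : n - 1 < n := by omega
        have hjlt : ((0 : Fin n) : ℕ) + ((⟨n - 1, hjn⟩ : Fin n) : ℕ) < n := by
          show 0 + (n - 1) < n; omega
        have h5 := h ⟨n - 1, hjn⟩ hjlt
        rw [hAt, hCval] at h5
        replace h5 := h5.symm
        rw [decide_eq_true_eq] at h5
        have e2 : ((⟨n - 1, hjn⟩ : Fin n) : ℕ) = n - 1 := rfl
        omega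
      have hDBB0' : ∀ j : Fin n, ((0 : Fin n) : ℕ) + (j : ℕ) < n →
          C ((0 : Fin n) + j) = C j := fun j _ => by rw [zero_add]
      rw [conway, conway, conway, conway, ← Finset.sum_add_distrib, ← Finset.sum_add_distrib]
      refine Finset.sum_congr rfl fun i _ => ?_
      by_cases hi : i = 0
      · subst hi
        rw [if_pos (hDAA 0), if_neg (hDBAt 0), if_pos hDBB0', if_neg hDAB0]
      · rw [if_pos (hDAA i), if_neg (hDBAt i), if_neg (hDBBt i hi), if_pos (hDABt i hi)]
        omega
  refine ⟨hlt, by omega, ?_⟩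
  constructor
  · intro h
    exact hforward (by omega)
  · intro h
    have := hrev h
    omega
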